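/- The ranked agenda rule RA is agenda separable: for every constrained agenda (A,Γ), every independent partition {A1,A2} of A, and every profile P over A, RA(P) = { J1 ∪ J2 : J1 ∈ RA(P↓A1), J2 ∈ RA(P↓A2) }. -/

import Mathlib

/-!
Judgment aggregation framework.
Valuations form a nonempty finite type `V`; a formula is identified with its set of
models, i.e. a `Finset V`; negation is complement.
-/

namespace JA

variable {V : Type*} [Fintype V] [DecidableEq V]

/-- A set of formulas `J` is `Γ`-consistent if some model of `Γ` satisfies every formula of `J`. -/
def Consistent (Γ : Finset V) (J : Finset (Finset V)) : Prop :=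
  ∃ v ∈ Γ, ∀ φ ∈ J, v ∈ φ

/-- `A` is an agenda: it is closed under negation (complement) and contains no formula
with an empty or full set of models. -/
def IsAgenda (A : Finset (Finset V)) : Prop :=
  (∀ φ ∈ A, φᶜ ∈ A) ∧ ∀ φ ∈ A, φ.Nonempty ∧ φ ≠ Finset.univ

/-- The set `𝒥_A` of complete `Γ`-consistent judgment sets over the agenda `A`. -/
def CCJ (Γ : Finset V) (A : Finset (Finset V)) : Set (Finset (Finset V)) :=
  {J | J ⊆ A ∧ (∀ φ ∈ A, φ ∈ J ∨ φᶜ ∈ J) ∧ Consistent Γ J}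

/-- A profile is an `n`-tuple of complete `Γ`-consistent judgment sets. -/
def IsProfile (Γ : Finset V) (A : Finset (Finset V)) {n : ℕ}
    (P : Fin n → Finset (Finset V)) : Prop :=
  ∀ i, P i ∈ CCJ Γ A

/-- Restriction `P↓B` of a profile `P` to a sub-agenda `B`. -/
def restrict {n : ℕ} (P : Fin n → Finset (Finset V)) (B : Finset (Finset V)) :
    Fin n → Finset (Finset V) :=
  fun i => P i ∩ B

/-- `{A1, A2}` is an independent partition of `A`. -/
def IndepPartition (Γ : Finset V) (A A1 A2 : Finset (Finset V)) : Prop :=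
  A1 ∪ A2 = A ∧ Disjoint A1 A2 ∧ IsAgenda A1 ∧ IsAgenda A2 ∧
    ∀ J1 ∈ CCJ Γ A1, ∀ J2 ∈ CCJ Γ A2, Consistent Γ (J1 ∪ J2)

/-- `{A1, A2}` is an independent overlapping decomposition (IOD) of `A`. -/
def IOD (Γ : Finset V) (A A1 A2 : Finset (Finset V)) : Prop :=
  A1 ∪ A2 = A ∧ IsAgenda A1 ∧ IsAgenda A2 ∧
    ∀ J1 ∈ CCJ Γ A1, ∀ J2 ∈ CCJ Γ A2, J1 ∩ A2 = J2 ∩ A1 → J1 ∪ J2 ∈ CCJ Γ A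

/-- The set `{ J1 ∪ J2 : J1 ∈ S1, J2 ∈ S2 }`. -/
def pairUnions (S1 S2 : Set (Finset (Finset V))) : Set (Finset (Finset V)) :=
  {J | ∃ J1 ∈ S1, ∃ J2 ∈ S2, J = J1 ∪ J2}

/-- `N(P,φ)`: the number of agents of the profile `P` accepting `φ`. -/
def Ncount {n : ℕ} (P : Fin n → Finset (Finset V)) (φ : Finset V) : ℕ :=
  (Finset.univ.filter fun i => φ ∈ P i).card

/-- The majoritarian set `m(P) = {φ ∈ A : N(P,φ) > n/2}`. -/
def maj {n : ℕ} (A : Finset (Finset V)) (P : Fin n → Finset (Finset V)) :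
    Finset (Finset V) :=
  A.filter fun φ => n < 2 * Ncount P φ

end JA

namespace JA

variable {V : Type*} [Fintype V] [DecidableEq V]

open Classical in
/-- The greedy procedure of the ranked agenda rule: go through the list of agenda
formulas in order, adding a formula whenever it keeps the set `Γ`-consistent. -/
noncomputable def greedy (Γ : Finset V) :
    List (Finset V) → Finset (Finset V) → Finset (Finset V)
  | [], S => S
  | φ :: l, S =>
      if Consistent Γ (insert φ S) then greedy Γ l (insert φ S) else greedy Γ l S

/-- The ranked agenda rule `RA`: outputs all judgment sets obtained by running the greedy
procedure along some enumeration of `A` ordered by weakly decreasing majority support. -/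
noncomputable def RA (Γ : Finset V) (A : Finset (Finset V)) {n : ℕ}
    (P : Fin n → Finset (Finset V)) : Set (Finset (Finset V)) :=
  {J | ∃ l : List (Finset V), l.Nodup ∧ l.toFinset = A ∧
    l.Pairwise (fun φ ψ => Ncount P ψ ≤ Ncount P φ) ∧ J = greedy Γ l ∅}

end JA

namespace JA

variable {V : Type*} [Fintype V] [DecidableEq V]

-- auxiliary lemmas

set_option linter.unusedSectionVars false

lemma consistent_mono {Γ : Finset V} {S T : Finset (Finset V)} (hST : S ⊆ T)
    (h : Consistent Γ T) : Consistent Γ S := by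
  obtain ⟨v, hv, hall⟩ := h
  exact ⟨v, hv, fun φ hφ => hall φ (hST hφ)⟩

lemma extend_cons {Γ : Finset V} {A S : Finset (Finset V)} (hA : IsAgenda A)
    (hS : S ⊆ A) (hc : Consistent Γ S) : ∃ J ∈ CCJ Γ A, S ⊆ J := by
  obtain ⟨v, hv, hall⟩ := hc
  refine ⟨A.filter (fun φ => v ∈ φ), ⟨Finset.filter_subset _ _, ?_, v, hv, ?_⟩, ?_⟩
  · intro φ hφ
    by_cases hvφ : v ∈ φ
    · exact Or.inl (Finset.mem_filter.2 ⟨hφ, hvφ⟩)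
    · exact Or.inr (Finset.mem_filter.2 ⟨hA.1 φ hφ, Finset.mem_compl.2 hvφ⟩)
  · intro φ hφ; exact (Finset.mem_filter.1 hφ).2
  · intro φ hφ; exact Finset.mem_filter.2 ⟨hS hφ, hall φ hφ⟩

lemma greedy_split {Γ : Finset V} {A1 A2 : Finset (Finset V)}
    (hdisj : Disjoint A1 A2)
    (hind : ∀ S1 S2 : Finset (Finset V), S1 ⊆ A1 → S2 ⊆ A2 →
      Consistent Γ S1 → Consistent Γ S2 → Consistent Γ (S1 ∪ S2)) :
    ∀ (l : List (Finset V)) (S1 S2 : Finset (Finset V)),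
      (∀ φ ∈ l, φ ∈ A1 ∨ φ ∈ A2) → S1 ⊆ A1 → S2 ⊆ A2 →
      Consistent Γ S1 → Consistent Γ S2 →
      greedy Γ l (S1 ∪ S2) =
        greedy Γ (l.filter (· ∈ A1)) S1 ∪ greedy Γ (l.filter (· ∈ A2)) S2 := by
  intro l
  induction l with
  | nil => intro S1 S2 _ _ _ _ _; simp [greedy]
  | cons φ l ih =>
    intro S1 S2 hmem hS1 hS2 hc1 hc2
    rcases hmem φ (List.mem_cons_self) with h1 | h2
    · have hn2 : φ ∉ A2 := fun h => (Finset.disjoint_left.1 hdisj h1) h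
      rw [List.filter_cons_of_pos (by simp [h1]), List.filter_cons_of_neg (by simp [hn2])]
      have hkey : Consistent Γ (insert φ (S1 ∪ S2)) ↔ Consistent Γ (insert φ S1) := by
        constructor
        · exact fun h => consistent_mono
            (Finset.insert_subset_insert φ Finset.subset_union_left) h
        · intro h
          have := hind (insert φ S1) S2 (Finset.insert_subset h1 hS1) hS2 h hc2
          rwa [Finset.insert_union] at this
      by_cases hc : Consistent Γ (insert φ S1)
      · rw [greedy, greedy, if_pos (hkey.2 hc), if_pos hc, ← Finset.insert_union]
        exact ih (insert φ S1) S2 (fun ψ hψ => hmem ψ (List.mem_cons_of_mem _ hψ))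
          (Finset.insert_subset h1 hS1) hS2 hc hc2
      · rw [greedy, greedy, if_neg (fun h => hc (hkey.1 h)), if_neg hc]
        exact ih S1 S2 (fun ψ hψ => hmem ψ (List.mem_cons_of_mem _ hψ)) hS1 hS2 hc1 hc2
    · have hn1 : φ ∉ A1 := fun h => (Finset.disjoint_left.1 hdisj h) h2
      rw [List.filter_cons_of_neg (by simp [hn1]), List.filter_cons_of_pos (by simp [h2])]
      have hkey : Consistent Γ (insert φ (S1 ∪ S2)) ↔ Consistent Γ (insert φ S2) := by
        constructor
        · exact fun h => consistent_mono
            (Finset.insert_subset_insert φ Finset.subset_union_right) h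
        · intro h
          have := hind S1 (insert φ S2) hS1 (Finset.insert_subset h2 hS2) hc1 h
          rwa [Finset.union_insert] at this
      by_cases hc : Consistent Γ (insert φ S2)
      · rw [greedy, greedy, if_pos (hkey.2 hc), if_pos hc, ← Finset.union_insert]
        exact ih S1 (insert φ S2) (fun ψ hψ => hmem ψ (List.mem_cons_of_mem _ hψ))
          hS1 (Finset.insert_subset h2 hS2) hc1 hc
      · rw [greedy, greedy, if_neg (fun h => hc (hkey.1 h)), if_neg hc]
        exact ih S1 S2 (fun ψ hψ => hmem ψ (List.mem_cons_of_mem _ hψ)) hS1 hS2 hc1 hc2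

-- merge of two lists sorted by weakly decreasing c-value

def mymerge {α : Type*} (c : α → ℕ) : List α → List α → List α
  | [], l => l
  | l, [] => l
  | a :: l, b :: r =>
      if c b ≤ c a then a :: mymerge c l (b :: r) else b :: mymerge c (a :: l) r
termination_by l r => l.length + r.length

lemma mymerge_nil_left {α : Type*} (c : α → ℕ) (r : List α) : mymerge c [] r = r := by
  rw [mymerge]

lemma mymerge_nil_right {α : Type*} (c : α → ℕ) (l : List α) : mymerge c l [] = l := by
  cases l <;> (rw [mymerge]; try simp)

lemma mymerge_perm {α : Type*} (c : α → ℕ) :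
    ∀ (l r : List α), (mymerge c l r).Perm (l ++ r) := by
  intro l r
  induction l, r using mymerge.induct c with
  | case1 l => simp [mymerge_nil_left]
  | case2 l _ => simp [mymerge_nil_right]
  | case3 a l b r h ih => rw [mymerge, if_pos h]; exact ih.cons a
  | case4 a l b r h ih =>
      rw [mymerge, if_neg h]
      exact (ih.cons b).trans List.perm_middle.symm

lemma mem_mymerge {α : Type*} (c : α → ℕ) (l r : List α) (x : α) :
    x ∈ mymerge c l r ↔ x ∈ l ∨ x ∈ r := by
  rw [(mymerge_perm c l r).mem_iff, List.mem_append]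

lemma mymerge_sorted {α : Type*} (c : α → ℕ) :
    ∀ (l r : List α), l.Pairwise (fun a b => c b ≤ c a) → r.Pairwise (fun a b => c b ≤ c a) →
      (mymerge c l r).Pairwise (fun a b => c b ≤ c a) := by
  intro l r
  induction l, r using mymerge.induct c with
  | case1 l => intro _ h; rw [mymerge_nil_left]; exact h
  | case2 l _ => intro h _; rw [mymerge_nil_right]; exact h
  | case3 a l b r h ih =>
      intro hl hr
      rw [mymerge, if_pos h]
      rw [List.pairwise_cons] at hl ⊢
      refine ⟨?_, ih hl.2 hr⟩
      intro x hx
      rcases (mem_mymerge c l (b :: r) x).1 hx with hx | hx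
      · exact hl.1 x hx
      · rcases List.mem_cons.1 hx with rfl | hx
        · exact h
        · exact le_trans ((List.pairwise_cons.1 hr).1 x hx) h
  | case4 a l b r h ih =>
      intro hl hr
      rw [mymerge, if_neg h]
      rw [List.pairwise_cons] at hr ⊢
      refine ⟨?_, ih hl hr.2⟩
      intro x hx
      have hab : c a ≤ c b := le_of_not_ge h
      rcases (mem_mymerge c (a :: l) r x).1 hx with hx | hx
      · rcases List.mem_cons.1 hx with rfl | hx
        · exact hab
        · exact le_trans ((List.pairwise_cons.1 hl).1 x hx) hab
      · exact hr.1 x hx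

lemma mymerge_filter_left {α : Type*} (c : α → ℕ) (p : α → Bool) :
    ∀ (l r : List α), (∀ x ∈ l, p x = true) → (∀ x ∈ r, p x = false) →
      (mymerge c l r).filter p = l := by
  intro l r
  induction l, r using mymerge.induct c with
  | case1 l =>
      intro _ hr
      rw [mymerge_nil_left]
      exact List.filter_eq_nil_iff.2 (fun x hx => by simp [hr x hx])
  | case2 l _ =>
      intro hl _
      rw [mymerge_nil_right]
      exact List.filter_eq_self.2 hl
  | case3 a l b r h ih =>
      intro hl hr
      rw [mymerge, if_pos h, List.filter_cons_of_pos (hl a (List.mem_cons_self))]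
      rw [ih (fun x hx => hl x (List.mem_cons_of_mem _ hx)) hr]
  | case4 a l b r h ih =>
      intro hl hr
      rw [mymerge, if_neg h,
        List.filter_cons_of_neg (by simp [hr b (List.mem_cons_self)])]
      exact ih hl (fun x hx => hr x (List.mem_cons_of_mem _ hx))

lemma mymerge_filter_right {α : Type*} (c : α → ℕ) (p : α → Bool) :
    ∀ (l r : List α), (∀ x ∈ l, p x = false) → (∀ x ∈ r, p x = true) →
      (mymerge c l r).filter p = r := by
  intro l r
  induction l, r using mymerge.induct c with
  | case1 l =>
      intro _ hr
      rw [mymerge_nil_left]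
      exact List.filter_eq_self.2 hr
  | case2 l _ =>
      intro hl _
      rw [mymerge_nil_right]
      exact List.filter_eq_nil_iff.2 (fun x hx => by simp [hl x hx])
  | case3 a l b r h ih =>
      intro hl hr
      rw [mymerge, if_pos h,
        List.filter_cons_of_neg (by simp [hl a (List.mem_cons_self)])]
      exact ih (fun x hx => hl x (List.mem_cons_of_mem _ hx)) hr
  | case4 a l b r h ih =>
      intro hl hr
      rw [mymerge, if_neg h, List.filter_cons_of_pos (hr b (List.mem_cons_self))]
      rw [ih hl (fun x hx => hr x (List.mem_cons_of_mem _ hx))]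


lemma Ncount_restrict {n : ℕ} (P : Fin n → Finset (Finset V)) (B : Finset (Finset V))
    (φ : Finset V) (h : φ ∈ B) : Ncount (restrict P B) φ = Ncount P φ := by
  unfold Ncount restrict
  congr 1
  ext i
  simp [Finset.mem_inter, h]

end JA

namespace JA

/-- The ranked agenda rule is agenda separable. -/
theorem ra_agenda_separable {V : Type*} [Fintype V] [DecidableEq V] [Nonempty V] :
    ∀ (Γ : Finset V) (A A1 A2 : Finset (Finset V)) (n : ℕ) (P : Fin n → Finset (Finset V)),
      Γ.Nonempty → IsAgenda A → IndepPartition Γ A A1 A2 → IsProfile Γ A P →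
      RA Γ A P = pairUnions (RA Γ A1 (restrict P A1)) (RA Γ A2 (restrict P A2)) := by
  intro Γ A A1 A2 n P hΓ hA hpart hprof
  obtain ⟨hA12, hdisj, hAg1, hAg2, hcons⟩ := hpart
  obtain ⟨v0, hv0⟩ := hΓ
  have hempty : Consistent Γ (∅ : Finset (Finset V)) := ⟨v0, hv0, by simp⟩
  have hind : ∀ S1 S2 : Finset (Finset V), S1 ⊆ A1 → S2 ⊆ A2 →
      Consistent Γ S1 → Consistent Γ S2 → Consistent Γ (S1 ∪ S2) := by
    intro S1 S2 h1 h2 hc1 hc2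
    obtain ⟨J1, hJ1, hS1⟩ := extend_cons hAg1 h1 hc1
    obtain ⟨J2, hJ2, hS2⟩ := extend_cons hAg2 h2 hc2
    exact consistent_mono (Finset.union_subset_union hS1 hS2) (hcons J1 hJ1 J2 hJ2)
  have hsub1 : A1 ⊆ A := hA12 ▸ Finset.subset_union_left
  have hsub2 : A2 ⊆ A := hA12 ▸ Finset.subset_union_right
  ext J
  constructor
  · rintro ⟨l, hnd, htf, hsort, rfl⟩
    have hmem : ∀ φ ∈ l, φ ∈ A1 ∨ φ ∈ A2 := by
      intro φ hφ
      have h1 : φ ∈ A := by rw [← htf]; exact List.mem_toFinset.2 hφ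
      rw [← hA12] at h1
      exact Finset.mem_union.1 h1
    have hsplit := greedy_split hdisj hind l ∅ ∅ hmem (Finset.empty_subset _)
      (Finset.empty_subset _) hempty hempty
    rw [Finset.empty_union] at hsplit
    refine ⟨_, ⟨l.filter (· ∈ A1), hnd.filter _, ?_, ?_, rfl⟩,
            _, ⟨l.filter (· ∈ A2), hnd.filter _, ?_, ?_, rfl⟩, hsplit⟩
    · ext x
      simp only [List.mem_toFinset, List.mem_filter, decide_eq_true_eq]
      constructor
      · exact fun h => h.2
      · intro hx
        refine ⟨?_, hx⟩
        rw [← List.mem_toFinset, htf]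
        exact hsub1 hx
    · refine (hsort.filter _).imp_of_mem ?_
      intro a b ha hb hR
      have ha1 : a ∈ A1 := by simpa using (List.mem_filter.1 ha).2
      have hb1 : b ∈ A1 := by simpa using (List.mem_filter.1 hb).2
      rwa [Ncount_restrict P A1 a ha1, Ncount_restrict P A1 b hb1]
    · ext x
      simp only [List.mem_toFinset, List.mem_filter, decide_eq_true_eq]
      constructor
      · exact fun h => h.2
      · intro hx
        refine ⟨?_, hx⟩
        rw [← List.mem_toFinset, htf]
        exact hsub2 hx
    · refine (hsort.filter _).imp_of_mem ?_
      intro a b ha hb hR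
      have ha2 : a ∈ A2 := by simpa using (List.mem_filter.1 ha).2
      have hb2 : b ∈ A2 := by simpa using (List.mem_filter.1 hb).2
      rwa [Ncount_restrict P A2 a ha2, Ncount_restrict P A2 b hb2]
  · rintro ⟨J1, ⟨l1, hnd1, htf1, hs1, rfl⟩, J2, ⟨l2, hnd2, htf2, hs2, rfl⟩, rfl⟩
    have hmem1 : ∀ x ∈ l1, x ∈ A1 := by
      intro x hx; rw [← htf1]; exact List.mem_toFinset.2 hx
    have hmem2 : ∀ x ∈ l2, x ∈ A2 := by
      intro x hx; rw [← htf2]; exact List.mem_toFinset.2 hx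
    set c : Finset V → ℕ := Ncount P with hc
    have hs1' : l1.Pairwise (fun a b => c b ≤ c a) := by
      refine hs1.imp_of_mem ?_
      intro a b ha hb hR
      simp only [hc]
      rwa [← Ncount_restrict P A1 a (hmem1 a ha), ← Ncount_restrict P A1 b (hmem1 b hb)]
    have hs2' : l2.Pairwise (fun a b => c b ≤ c a) := by
      refine hs2.imp_of_mem ?_
      intro a b ha hb hR
      simp only [hc]
      rwa [← Ncount_restrict P A2 a (hmem2 a ha), ← Ncount_restrict P A2 b (hmem2 b hb)]
    have hperm := mymerge_perm c l1 l2
    have hdislist : l1.Disjoint l2 := fun x h1 h2 =>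
      Finset.disjoint_left.1 hdisj (hmem1 x h1) (hmem2 x h2)
    have hndm : (mymerge c l1 l2).Nodup :=
      hperm.symm.nodup (List.Nodup.append hnd1 hnd2 hdislist)
    have htfm : (mymerge c l1 l2).toFinset = A := by
      rw [List.toFinset_eq_of_perm _ _ hperm, List.toFinset_append, htf1, htf2, hA12]
    have hmemm : ∀ φ ∈ mymerge c l1 l2, φ ∈ A1 ∨ φ ∈ A2 := by
      intro φ hφ
      rcases (mem_mymerge c l1 l2 φ).1 hφ with h | h
      · exact Or.inl (hmem1 φ h)
      · exact Or.inr (hmem2 φ h)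
    have hsplit := greedy_split hdisj hind (mymerge c l1 l2) ∅ ∅ hmemm
      (Finset.empty_subset _) (Finset.empty_subset _) hempty hempty
    rw [Finset.empty_union] at hsplit
    have hf1 : (mymerge c l1 l2).filter (· ∈ A1) = l1 := by
      refine mymerge_filter_left c _ l1 l2 ?_ ?_
      · intro x hx; simp [hmem1 x hx]
      · intro x hx
        simp only [decide_eq_false_iff_not]
        exact fun h => Finset.disjoint_left.1 hdisj h (hmem2 x hx)
    have hf2 : (mymerge c l1 l2).filter (· ∈ A2) = l2 := by
      refine mymerge_filter_right c _ l1 l2 ?_ ?_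
      · intro x hx
        simp only [decide_eq_false_iff_not]
        exact fun h => Finset.disjoint_left.1 hdisj (hmem1 x hx) h
      · intro x hx; simp [hmem2 x hx]
    refine ⟨mymerge c l1 l2, hndm, htfm, mymerge_sorted c l1 l2 hs1' hs2', ?_⟩
    rw [hsplit, hf1, hf2]

end JA
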